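/- Let 1/2 < α < 1 and c > 0, and let N : ℕ → ℕ satisfy N(d) > d for all d and N(d) - 2d ≥ c·d^α for all sufficiently large d. Then P_{d,N(d)} → 0 as d → ∞. -/
import Mathlib


open Filter Finset Real Topology

/-- The Wendel probability `P_{d,N} = 2^{1-N} · Σ_{i=0}^{d-1} C(N-1, i)`. -/
noncomputable def wendelP (d N : ℕ) : ℝ :=
  (∑ i ∈ Finset.range d, ((N - 1).choose i : ℝ)) / 2 ^ (N - 1)

/-- Markov-type bound on partial sums of binomial coefficients. -/
lemma wendel_aux_sum_choose_le (n d : ℕ) (hd : d ≤ n) (x : ℝ) (hx0 : 0 < x) (hx1 : x ≤ 1) :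
    ∑ i ∈ Finset.range d, ((n.choose i : ℝ)) ≤ (1 + x) ^ n / x ^ (d - 1) := by
  rw [le_div_iff₀ (by positivity)]
  have hbin : (1 + x) ^ n = ∑ i ∈ Finset.range (n + 1), (n.choose i : ℝ) * x ^ i := by
    rw [add_comm 1 x, add_pow]
    exact Finset.sum_congr rfl fun i _ => by rw [one_pow]; ring
  have h1 : (∑ i ∈ Finset.range d, ((n.choose i : ℝ))) * x ^ (d - 1)
      = ∑ i ∈ Finset.range d, (n.choose i : ℝ) * x ^ (d - 1) := by
    rw [Finset.sum_mul]
  rw [h1, hbin]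
  have h2 : ∑ i ∈ Finset.range d, (n.choose i : ℝ) * x ^ (d - 1)
      ≤ ∑ i ∈ Finset.range d, (n.choose i : ℝ) * x ^ i := by
    apply Finset.sum_le_sum
    intro i hi
    have hi' : i ≤ d - 1 := Nat.le_sub_one_of_lt (Finset.mem_range.mp hi)
    have := pow_le_pow_of_le_one hx0.le hx1 hi'
    exact mul_le_mul_of_nonneg_left this (by positivity)
  refine h2.trans ?_
  apply Finset.sum_le_sum_of_subset_of_nonneg
  · exact Finset.range_subset_range.mpr (by omega)
  · intro i _ _; positivity

/-- `exp (-(s + 2s²)) ≤ 1 - s` for `0 ≤ s ≤ 1/2`. -/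
lemma wendel_aux_exp_le (s : ℝ) (hs0 : 0 ≤ s) (hs2 : s ≤ 1/2) :
    Real.exp (-(s + 2 * s ^ 2)) ≤ 1 - s := by
  have h := Real.add_one_le_exp (s + 2 * s ^ 2)
  have hpos := Real.exp_pos (s + 2 * s ^ 2)
  have key : 1 ≤ (1 - s) * Real.exp (s + 2 * s ^ 2) := by nlinarith
  rw [Real.exp_neg, inv_eq_one_div, div_le_iff₀ hpos]
  linarith

lemma wendel_aux_key (dR t s e nn : ℝ) (hdR0 : 0 < dR) (hs0 : 0 ≤ s)
    (hst : s ≤ t / (8 * dR)) (he : e ≤ dR) (hnn : nn = 2 * dR + t) :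
    -(nn * (s/2)) - (-(e * (s + 2 * s ^ 2))) ≤ -(s * t / 4) := by
  have hmul : 2 * dR * s * s ≤ 2 * dR * s * (t / (8 * dR)) :=
    mul_le_mul_of_nonneg_left hst (by positivity)
  have heq2 : 2 * dR * s * (t / (8 * dR)) = s * t / 4 := by
    field_simp; ring
  have h2 : 2 * dR * s ^ 2 ≤ s * t / 4 := by nlinarith [hmul, heq2]
  have h3 : e * (s + 2 * s ^ 2) ≤ dR * (s + 2 * s ^ 2) :=
    mul_le_mul_of_nonneg_right he (by positivity)
  rw [hnn]
  nlinarith [h2, h3]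

theorem wendel_tendsto_zero_supercritical (α c : ℝ) (hα1 : 1 / 2 < α) (hα2 : α < 1)
    (hc : 0 < c) (N : ℕ → ℕ) (hN : ∀ d, d < N d)
    (h1 : ∀ᶠ d : ℕ in atTop, c * (d : ℝ) ^ α ≤ (N d : ℝ) - 2 * d) :
    Tendsto (fun d : ℕ => wendelP d (N d)) atTop (𝓝 0) := by
  have hα0 : 0 < α := by linarith
  -- the decay function
  set L : ℕ → ℝ := fun d => min (c ^ 2 * (d:ℝ) ^ (α + α - 1) / 128) (c * (d:ℝ) ^ α / 16) with hLdef
  have hf1 : Tendsto (fun d : ℕ => c ^ 2 * (d:ℝ) ^ (α + α - 1) / 128) atTop atTop := by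
    have := ((tendsto_rpow_atTop (by linarith : (0:ℝ) < α + α - 1)).comp
      tendsto_natCast_atTop_atTop).const_mul_atTop (by positivity : (0:ℝ) < c ^ 2)
    exact this.atTop_div_const (by norm_num)
  have hf2 : Tendsto (fun d : ℕ => c * (d:ℝ) ^ α / 16) atTop atTop := by
    have := ((tendsto_rpow_atTop hα0).comp
      tendsto_natCast_atTop_atTop).const_mul_atTop hc
    exact this.atTop_div_const (by norm_num)
  have hL : Tendsto L atTop atTop := by
    rw [tendsto_atTop]
    intro b
    filter_upwards [hf1.eventually_ge_atTop b, hf2.eventually_ge_atTop b] with d hb1 hb2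
    exact le_min hb1 hb2
  have hUb : Tendsto (fun d : ℕ => Real.exp (-(L d))) atTop (𝓝 0) :=
    Real.tendsto_exp_atBot.comp (tendsto_neg_atTop_atBot.comp hL)
  -- eventually `(c/2) * d^α ≥ 1`
  have hev1 : ∀ᶠ d : ℕ in atTop, 1 ≤ c / 2 * (d:ℝ) ^ α := by
    have := ((tendsto_rpow_atTop hα0).comp
      tendsto_natCast_atTop_atTop).const_mul_atTop (by positivity : (0:ℝ) < c / 2)
    exact this.eventually_ge_atTop 1
  apply squeeze_zero' ?_ ?_ hUb
  · filter_upwards with d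
    unfold wendelP
    positivity
  filter_upwards [h1, hev1, eventually_ge_atTop 1] with d hd1 hd2 hd3
  -- setup
  set n : ℕ := N d - 1 with hn
  have hNd1 : 1 ≤ N d := (hN d).trans_le' (by omega)
  have hnR : (n : ℝ) = (N d : ℝ) - 1 := by
    rw [hn, Nat.cast_sub hNd1]; norm_num
  have hdn : d ≤ n := by have := hN d; omega
  set dR : ℝ := (d : ℝ) with hdR
  have hdR1 : 1 ≤ dR := by rw [hdR]; exact_mod_cast hd3
  have hdR0 : 0 < dR := by linarith
  set t : ℝ := (n : ℝ) - 2 * dR with htdef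
  have hrp : (0:ℝ) ≤ dR ^ α := Real.rpow_nonneg hdR0.le α
  have ht : c / 2 * dR ^ α ≤ t := by
    rw [htdef, hnR]
    nlinarith [hd1, hd2]
  have ht1 : 1 ≤ t := le_trans hd2 ht
  have ht0 : 0 < t := by linarith
  set s : ℝ := min (t / (8 * dR)) (1/2) with hsdef
  have hs0 : 0 < s := lt_min (by positivity) (by norm_num)
  have hs2 : s ≤ 1/2 := min_le_right _ _
  have hst : s ≤ t / (8 * dR) := min_le_left _ _
  set x : ℝ := 1 - s with hxdef
  have hx0 : 0 < x := by rw [hxdef]; linarith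
  have hx1 : x ≤ 1 := by rw [hxdef]; linarith
  -- step 1: Markov bound
  have step1 : wendelP d (N d) ≤ ((1 + x) / 2) ^ n / x ^ (d - 1) := by
    have hA := wendel_aux_sum_choose_le n d hdn x hx0 hx1
    have heq : wendelP d (N d) = (∑ i ∈ Finset.range d, ((n.choose i : ℝ))) / 2 ^ n := rfl
    have hrhs : ((1 + x) / 2) ^ n / x ^ (d - 1) = ((1 + x) ^ n / x ^ (d - 1)) / 2 ^ n := by
      rw [div_pow]; ring
    rw [heq, hrhs]
    gcongr
  -- step 2: exponential bounds
  set e : ℝ := ((d - 1 : ℕ) : ℝ) with hedef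
  have he : e ≤ dR := by
    rw [hedef, hdR]; exact_mod_cast Nat.sub_le d 1
  have he0 : 0 ≤ e := by rw [hedef]; positivity
  have step2 : ((1 + x) / 2) ^ n / x ^ (d - 1)
      ≤ Real.exp (-((n:ℝ) * (s/2))) / Real.exp (-(e * (s + 2 * s ^ 2))) := by
    apply div_le_div₀ (by positivity) _ (by positivity) _
    · have hle : (1 + x) / 2 ≤ Real.exp (-(s/2)) := by
        have := Real.add_one_le_exp (-(s/2))
        rw [hxdef]; linarith
      calc ((1 + x) / 2) ^ n ≤ Real.exp (-(s/2)) ^ n := by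
            apply pow_le_pow_left₀ (by rw [hxdef]; linarith) hle
        _ = Real.exp (-((n:ℝ) * (s/2))) := by
            rw [← Real.exp_nat_mul]; ring_nf
    · have hle : Real.exp (-(s + 2 * s ^ 2)) ≤ x := by
        rw [hxdef]; exact wendel_aux_exp_le s hs0.le hs2
      calc Real.exp (-(e * (s + 2 * s ^ 2)))
          = Real.exp (-(s + 2 * s ^ 2)) ^ (d - 1) := by
            rw [← Real.exp_nat_mul, hedef]; ring_nf
        _ ≤ x ^ (d - 1) := pow_le_pow_left₀ (Real.exp_pos _).le hle _
  -- step 3: combine exponents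
  have step3 : Real.exp (-((n:ℝ) * (s/2))) / Real.exp (-(e * (s + 2 * s ^ 2)))
      ≤ Real.exp (-(L d)) := by
    rw [← Real.exp_sub, Real.exp_le_exp]
    have hnt : (n : ℝ) = 2 * dR + t := by rw [htdef]; ring
    have key : -((n:ℝ) * (s/2)) - (-(e * (s + 2 * s ^ 2))) ≤ -(s * t / 4) :=
      wendel_aux_key dR t s e (n:ℝ) hdR0 hs0.le hst he hnt
    refine key.trans ?_
    rw [neg_le_neg_iff]
    -- L d ≤ s * t / 4
    rcases min_cases (t / (8 * dR)) (1/2) with ⟨hmin, _⟩ | ⟨hmin, _⟩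
    · -- s = t/(8 dR)
      have hseq : s = t / (8 * dR) := hmin
      have h4 : c ^ 2 * (dR ^ α * dR ^ α) ≤ 4 * (t * t) := by
        nlinarith [mul_self_le_mul_self (by positivity : (0:ℝ) ≤ c / 2 * dR ^ α) ht]
      have hrw : dR ^ (α + α - 1) = dR ^ α * dR ^ α / dR := by
        rw [← Real.rpow_add hdR0, Real.rpow_sub hdR0, Real.rpow_one]
      have hL1 : c ^ 2 * dR ^ (α + α - 1) / 128 ≤ s * t / 4 := by
        calc c ^ 2 * dR ^ (α + α - 1) / 128
            = c ^ 2 * (dR ^ α * dR ^ α) / (128 * dR) := by rw [hrw]; ring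
          _ ≤ 4 * (t * t) / (128 * dR) := by gcongr
          _ = t * t / (32 * dR) := by ring
          _ = s * t / 4 := by rw [hseq]; field_simp; ring
      exact le_trans (min_le_left _ _) hL1
    · -- s = 1/2
      have hseq : s = 1/2 := hmin
      have hL2 : c * dR ^ α / 16 ≤ s * t / 4 := by
        rw [hseq]; linarith
      exact le_trans (min_le_right _ _) hL2
  exact step1.trans (step2.trans step3)
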